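/- The set of local minima of F is finite; that is, the set {x* ∈ ℝ^n : there is a neighborhood of x* on which F(x) ≥ F(x*)} is a finite set. -/

import Mathlib

open Filter Set

/-- Second-order necessary condition: at a local minimum of a twice differentiable
function, the second derivative is nonnegative. -/
lemma aux_second_deriv_nonneg {f f1 : ℝ → ℝ} {a c : ℝ}
    (hmin : IsLocalMin f a) (hf : ∀ᶠ t in nhds a, HasDerivAt f (f1 t) t)
    (hf1 : HasDerivAt f1 c a) : 0 ≤ c := by
  by_contra hc
  push_neg at hc
  have h0 : f1 a = 0 := hmin.hasDerivAt_eq_zero hf.self_of_nhds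
  have hslope : Tendsto (slope f1 a) (nhdsWithin a {a}ᶜ) (nhds c) :=
    hasDerivAt_iff_tendsto_slope.1 hf1
  have hev : ∀ᶠ t in nhdsWithin a (Ioi a), slope f1 a t < 0 :=
    (hslope.mono_left (nhdsWithin_mono a fun t ht => ne_of_gt ht)).eventually_lt_const hc
  have hev2 : ∀ᶠ t in nhdsWithin a (Ioi a), f1 t < 0 := by
    filter_upwards [hev, self_mem_nhdsWithin] with t h1 h2
    rw [slope_def_field, h0, sub_zero] at h1
    have ht : 0 < t - a := sub_pos.2 h2
    by_contra hcon
    push_neg at hcon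
    exact absurd (div_nonneg hcon ht.le) (not_le.2 h1)
  have hev3 : ∀ᶠ t in nhdsWithin a (Ioi a), HasDerivAt f (f1 t) t :=
    hf.filter_mono nhdsWithin_le_nhds
  have hev4 : ∀ᶠ t in nhdsWithin a (Ioi a), f a ≤ f t :=
    (hmin.filter_mono nhdsWithin_le_nhds : IsMinFilter f _ a)
  obtain ⟨r, hr, hsub⟩ := mem_nhdsGT_iff_exists_Ioc_subset.mp
    (hev2.and (hev3.and hev4))
  have hanti : StrictAntiOn f (Icc a r) := by
    apply strictAntiOn_of_deriv_neg (convex_Icc a r)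
    · intro t ht
      rcases eq_or_lt_of_le ht.1 with h | h
      · exact (h ▸ hf.self_of_nhds.continuousAt).continuousWithinAt
      · exact ((hsub ⟨h, ht.2⟩).2.1).continuousAt.continuousWithinAt
    · intro t ht
      rw [interior_Icc] at ht
      have h := hsub ⟨ht.1, ht.2.le⟩
      rw [h.2.1.deriv]
      exact h.1
  have h1 : f r < f a :=
    hanti (left_mem_Icc.2 hr.le) (right_mem_Icc.2 hr.le) hr
  exact absurd (hsub ⟨hr, le_refl r⟩).2.2 (not_le.2 h1)

/-- `z ↦ z ^ q` is strictly convex on `(0, ∞)` for negative exponents `q`. -/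
lemma aux_strictConvexOn_rpow_neg {q : ℝ} (hq : q < 0) :
    StrictConvexOn ℝ (Set.Ioi (0:ℝ)) fun z : ℝ => z ^ q := by
  apply strictConvexOn_of_deriv2_pos (convex_Ioi 0)
  · intro z hz
    exact (Real.hasDerivAt_rpow_const (p := q) (Or.inl (ne_of_gt hz))).continuousAt.continuousWithinAt
  · intro z hz
    rw [interior_Ioi] at hz
    have heq : deriv (fun z : ℝ => z ^ q) =ᶠ[nhds z] fun w => q * w ^ (q - 1) := by
      filter_upwards [Ioi_mem_nhds hz] with w hw
      exact (Real.hasDerivAt_rpow_const (p := q) (Or.inl (ne_of_gt hw))).deriv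
    have h2 : deriv^[2] (fun z : ℝ => z ^ q) z = deriv (fun w : ℝ => q * w ^ (q - 1)) z := by
      simp only [Function.iterate_succ, Function.iterate_zero, Function.comp_apply, id_eq]
      exact heq.deriv_eq
    rw [h2]
    have hd : HasDerivAt (fun w : ℝ => q * w ^ (q - 1)) (q * ((q - 1) * z ^ (q - 1 - 1))) z :=
      (Real.hasDerivAt_rpow_const (p := q - 1) (Or.inl (ne_of_gt hz))).const_mul q
    rw [hd.deriv]
    have h3 : 0 < z ^ (q - 1 - 1) := Real.rpow_pos_of_pos hz _
    have h4 : 0 < q * (q - 1) := mul_pos_of_neg_of_neg hq (by linarith)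
    calc (0:ℝ) < q * (q - 1) * z ^ (q - 1 - 1) := mul_pos h4 h3
    _ = q * ((q - 1) * z ^ (q - 1 - 1)) := by ring

section
variable {n m : ℕ} {p lam : ℝ}

set_option maxHeartbeats 1000000 in
/-- Two local minima of the ℓ_p regularized least squares objective with the same
sign pattern coincide. -/
lemma aux_unique (hp0 : 0 < p) (hp1 : p < 1) (hlam : 0 < lam)
    (A : EuclideanSpace ℝ (Fin n) →L[ℝ] EuclideanSpace ℝ (Fin m))
    (b : EuclideanSpace ℝ (Fin m))
    (F : EuclideanSpace ℝ (Fin n) → ℝ)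
    (hF : ∀ x, F x = ‖A x - b‖ ^ 2 + lam * ∑ i, |x i| ^ p)
    (x y : EuclideanSpace ℝ (Fin n)) (hx : IsLocalMin F x) (hy : IsLocalMin F y)
    (hsgn : ∀ i, (0 < x i ↔ 0 < y i) ∧ (x i < 0 ↔ y i < 0)) : x = y := by
  by_contra hne
  set d : EuclideanSpace ℝ (Fin n) := y - x with hd
  have hdapp : ∀ i, d i = y i - x i := fun i => rfl
  have hy0 : ∀ i, x i = 0 → y i = 0 := by
    intro i h
    have h1 := (hsgn i).1
    have h2 := (hsgn i).2
    rw [h] at h1 h2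
    simp only [lt_irrefl, false_iff, iff_false] at h1 h2
    push_neg at h1 h2
    exact le_antisymm h1 h2
  have hd0 : ∀ i, x i = 0 → d i = 0 := by
    intro i h; rw [hdapp, hy0 i h, h, sub_zero]
  have hyne : ∀ i, x i ≠ 0 → y i ≠ 0 := by
    intro i h hy'
    rcases lt_trichotomy (x i) 0 with h' | h' | h'
    · rw [(hsgn i).2, hy'] at h'; exact lt_irrefl _ h'
    · exact h h'
    · rw [(hsgn i).1, hy'] at h'; exact lt_irrefl _ h'
  obtain ⟨i₀, hi₀⟩ : ∃ i, d i ≠ 0 := by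
    by_contra h
    push_neg at h
    apply hne
    have : d = 0 := by
      ext i; simpa using h i
    rw [hd] at this
    exact (sub_eq_zero.mp this).symm
  set σ : Fin n → ℝ := fun i => if x i < 0 then (-1 : ℝ) else 1 with hσ
  have hσx : ∀ i, σ i * x i = |x i| := by
    intro i
    by_cases h : x i < 0
    · simp only [hσ, if_pos h, abs_of_neg h]; ring
    · simp only [hσ, if_neg h, abs_of_nonneg (not_lt.1 h)]; ring
  have hσy : ∀ i, σ i * y i = |y i| := by
    intro i
    by_cases h : x i < 0
    · have hy' : y i < 0 := (hsgn i).2.1 h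
      simp only [hσ, if_pos h, abs_of_neg hy']; ring
    · have hy' : ¬ y i < 0 := fun hc => h ((hsgn i).2.2 hc)
      simp only [hσ, if_neg h, abs_of_nonneg (not_lt.1 hy')]; ring
  have hσsq : ∀ i, σ i * σ i = 1 := by
    intro i
    by_cases h : x i < 0 <;> simp [hσ, h]
  set v : EuclideanSpace ℝ (Fin m) := A x - b with hv
  set w : EuclideanSpace ℝ (Fin m) := A d with hw
  set u : Fin n → ℝ → ℝ := fun i t => σ i * x i + t * (σ i * d i) with hu
  have hulin : ∀ i t, u i t = (1 - t) * |x i| + t * |y i| := by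
    intro i t
    have h1 : σ i * d i = |y i| - |x i| := by
      rw [hdapp]
      rw [mul_sub, hσx, hσy]
    simp only [hu]
    rw [h1, hσx]
    ring
  have hupos : ∀ i, x i ≠ 0 → ∀ t ∈ Set.Icc (0:ℝ) 1, 0 < u i t := by
    intro i hxi t ht
    rw [hulin]
    have hax : 0 < |x i| := abs_pos.2 hxi
    have hay : 0 < |y i| := abs_pos.2 (hyne i hxi)
    rcases eq_or_lt_of_le ht.1 with h | h
    · rw [← h]; simpa using hax
    · have h1 : 0 ≤ (1 - t) * |x i| := mul_nonneg (by linarith [ht.2]) hax.le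
      nlinarith
  have hpos0 : ∀ i, x i ≠ 0 → 0 < u i 0 := fun i hi => hupos i hi 0 ⟨le_refl _, zero_le_one⟩
  have hpos1 : ∀ i, x i ≠ 0 → 0 < u i 1 := fun i hi => hupos i hi 1 ⟨zero_le_one, le_refl _⟩
  -- eventual positivity
  have hev : ∀ t₀ : ℝ, (∀ i, x i ≠ 0 → 0 < u i t₀) →
      ∀ᶠ t in nhds t₀, ∀ i, x i ≠ 0 → 0 < u i t := by
    intro t₀ h
    rw [eventually_all]
    intro i
    by_cases hxi : x i = 0
    · exact Eventually.of_forall fun t h' => absurd hxi h'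
    · have hc : Continuous (u i) := by
        simp only [hu]; fun_prop
      have := continuousAt_const.eventually_lt (hc.continuousAt (x := t₀)) (h i hxi)
      filter_upwards [this] with t ht _
      exact ht
  set q1 : ℝ := 2 * (inner ℝ v w : ℝ) with hq1
  set q2 : ℝ := ‖w‖ ^ 2 with hq2
  set g : ℝ → ℝ := fun t => ‖v‖ ^ 2 + q1 * t + q2 * t ^ 2 + lam * ∑ i, (u i t) ^ p with hg
  set g1 : ℝ → ℝ := fun t => q1 + 2 * q2 * t + lam * ∑ i, (p * (σ i * d i)) * (u i t) ^ (p - 1)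
    with hg1
  set g2 : ℝ → ℝ := fun t => 2 * q2 + lam * ∑ i, (p * (p - 1) * (d i) ^ 2) * (u i t) ^ (p - 2)
    with hg2
  -- F along the segment equals g
  have hγ : ∀ t : ℝ, (∀ i, x i ≠ 0 → 0 < u i t) → F (x + t • d) = g t := by
    intro t ht
    rw [hF]
    have hA : A (x + t • d) - b = v + t • w := by
      rw [map_add, map_smul, hv, hw]
      abel
    rw [hA, norm_add_sq_real, real_inner_smul_right, norm_smul]
    have hsum : ∀ i : Fin n, |(x + t • d) i| ^ p = (u i t) ^ p := by
      intro i
      have hco : (x + t • d) i = x i + t * d i := by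
        simp [PiLp.add_apply, PiLp.smul_apply, smul_eq_mul]
      rw [hco]
      by_cases hxi : x i = 0
      · rw [hxi, hd0 i hxi]
        simp only [hu, hxi, hd0 i hxi, mul_zero, zero_add, add_zero, abs_zero]
      · have h1 : 0 < u i t := ht i hxi
        have h2 : u i t = σ i * (x i + t * d i) := by simp only [hu]; ring
        have h3 : |x i + t * d i| = u i t := by
          have habs : |σ i| = 1 := by
            by_cases h : x i < 0 <;> simp [hσ, h]
          have h1' : 0 < σ i * (x i + t * d i) := h2 ▸ h1
          calc |x i + t * d i| = |σ i| * |x i + t * d i| := by rw [habs, one_mul]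
            _ = |σ i * (x i + t * d i)| := (abs_mul _ _).symm
            _ = σ i * (x i + t * d i) := abs_of_pos h1'
            _ = u i t := h2.symm
        rw [h3, h2]
    rw [Finset.sum_congr rfl fun i _ => hsum i]
    simp only [hg, hq1, hq2]
    rw [Real.norm_eq_abs, mul_pow, sq_abs]
    ring
  -- first derivative of g
  have hderiv1 : ∀ t₀ : ℝ, (∀ i, x i ≠ 0 → 0 < u i t₀) → HasDerivAt g (g1 t₀) t₀ := by
    intro t₀ ht
    have h1 : HasDerivAt (fun t : ℝ => q1 * t) (q1 * 1) t₀ := (hasDerivAt_id t₀).const_mul q1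
    have h2 : HasDerivAt (fun t : ℝ => q2 * t ^ 2) (q2 * ((2:ℕ) * t₀ ^ (2 - 1))) t₀ :=
      (hasDerivAt_pow 2 t₀).const_mul q2
    have hpoly : HasDerivAt (fun t : ℝ => ‖v‖ ^ 2 + q1 * t + q2 * t ^ 2)
        (q1 + 2 * q2 * t₀) t₀ := by
      have h3 := (h1.const_add (‖v‖ ^ 2)).add h2
      convert h3 using 1
      · rfl
      · rfl
      · rfl
      push_cast
      ring
    have hterm : ∀ i : Fin n, HasDerivAt (fun t => (u i t) ^ p)
        ((p * (σ i * d i)) * (u i t₀) ^ (p - 1)) t₀ := by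
      intro i
      by_cases hxi : x i = 0
      · have hdz : d i = 0 := hd0 i hxi
        have huz : (fun t : ℝ => (u i t) ^ p) = fun _ => (0:ℝ) ^ p := by
          funext t; simp [hu, hxi, hdz]
        have hvz : (p * (σ i * d i)) * (u i t₀) ^ (p - 1) = 0 := by rw [hdz]; ring
        rw [huz, hvz]
        exact hasDerivAt_const t₀ _
      · have h1' : 0 < u i t₀ := ht i hxi
        have hlin : HasDerivAt (u i) (1 * (σ i * d i)) t₀ :=
          ((hasDerivAt_id t₀).mul_const (σ i * d i)).const_add (σ i * x i)
        have hrpow : HasDerivAt (fun z : ℝ => z ^ p) (p * (u i t₀) ^ (p - 1)) (u i t₀) :=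
          Real.hasDerivAt_rpow_const (Or.inl h1'.ne')
        have hcomp : HasDerivAt (fun t => (u i t) ^ p)
            (p * (u i t₀) ^ (p - 1) * (1 * (σ i * d i))) t₀ := hrpow.comp t₀ hlin
        convert hcomp using 1
        ring
    have hsum : HasDerivAt (fun t => ∑ i, (u i t) ^ p)
        (∑ i, (p * (σ i * d i)) * (u i t₀) ^ (p - 1)) t₀ :=
      HasDerivAt.fun_sum fun i _ => hterm i
    exact hpoly.add (hsum.const_mul lam)
  -- second derivative of g (derivative of g1)
  have hderiv2 : ∀ t₀ : ℝ, (∀ i, x i ≠ 0 → 0 < u i t₀) → HasDerivAt g1 (g2 t₀) t₀ := by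
    intro t₀ ht
    have hpoly : HasDerivAt (fun t : ℝ => q1 + 2 * q2 * t) (2 * q2) t₀ := by
      have h1 : HasDerivAt (fun t : ℝ => (2 * q2) * t) ((2 * q2) * 1) t₀ :=
        (hasDerivAt_id t₀).const_mul (2 * q2)
      have h2 := h1.const_add q1
      convert h2 using 1
      · rfl
      · rfl
      ring
    have hterm : ∀ i : Fin n, HasDerivAt (fun t => (p * (σ i * d i)) * (u i t) ^ (p - 1))
        ((p * (p - 1) * (d i) ^ 2) * (u i t₀) ^ (p - 2)) t₀ := by
      intro i
      by_cases hxi : x i = 0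
      · have hdz : d i = 0 := hd0 i hxi
        have huz : (fun t : ℝ => (p * (σ i * d i)) * (u i t) ^ (p - 1)) = fun _ => (0:ℝ) := by
          funext t; rw [hdz]; ring
        have hvz : (p * (p - 1) * (d i) ^ 2) * (u i t₀) ^ (p - 2) = 0 := by rw [hdz]; ring
        rw [huz, hvz]
        exact hasDerivAt_const t₀ _
      · have h1' : 0 < u i t₀ := ht i hxi
        have hlin : HasDerivAt (u i) (1 * (σ i * d i)) t₀ :=
          ((hasDerivAt_id t₀).mul_const (σ i * d i)).const_add (σ i * x i)
        have hrpow : HasDerivAt (fun z : ℝ => z ^ (p - 1))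
            ((p - 1) * (u i t₀) ^ (p - 1 - 1)) (u i t₀) :=
          Real.hasDerivAt_rpow_const (Or.inl h1'.ne')
        have hcomp : HasDerivAt (fun t => (p * (σ i * d i)) * (u i t) ^ (p - 1))
            ((p * (σ i * d i)) * ((p - 1) * (u i t₀) ^ (p - 1 - 1) * (1 * (σ i * d i)))) t₀ :=
          (hrpow.comp t₀ hlin).const_mul _
        have hexp : p - 1 - 1 = p - 2 := by ring
        rw [hexp] at hcomp
        convert hcomp using 1
        linear_combination (p * (1 - p) * (d i) ^ 2 * (u i t₀) ^ (p - 2)) * (hσsq i)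
    have hsum : HasDerivAt (fun t => ∑ i, (p * (σ i * d i)) * (u i t) ^ (p - 1))
        (∑ i, (p * (p - 1) * (d i) ^ 2) * (u i t₀) ^ (p - 2)) t₀ :=
      HasDerivAt.fun_sum fun i _ => hterm i
    exact hpoly.add (hsum.const_mul lam)
  -- g has local minima at 0 and 1
  have hγ0 : x + (0:ℝ) • d = x := by simp
  have hγ1 : x + (1:ℝ) • d = y := by rw [one_smul, hd]; abel
  have hcont : Continuous fun t : ℝ => x + t • d := by fun_prop
  have hming : ∀ t₀ : ℝ, (∀ i, x i ≠ 0 → 0 < u i t₀) → ∀ z, x + t₀ • d = z →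
      IsLocalMin F z → IsLocalMin g t₀ := by
    intro t₀ ht z hz hmin
    have htend : Tendsto (fun t : ℝ => x + t • d) (nhds t₀) (nhds z) := by
      rw [← hz]; exact hcont.tendsto t₀
    have h1 : ∀ᶠ t in nhds t₀, F z ≤ F (x + t • d) := htend.eventually hmin
    have h2 : ∀ᶠ t in nhds t₀, F (x + t • d) = g t := (hev t₀ ht).mono fun t htt => hγ t htt
    have h3 : g t₀ = F z := by rw [← hγ t₀ ht, hz]
    show ∀ᶠ t in nhds t₀, g t₀ ≤ g t
    filter_upwards [h1, h2] with t h1t h2t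
    rw [h3, ← h2t]
    exact h1t
  have hmin0 : IsLocalMin g 0 := hming 0 hpos0 x hγ0 hx
  have hmin1 : IsLocalMin g 1 := hming 1 hpos1 y hγ1 hy
  have h10 : g1 0 = 0 := hmin0.hasDerivAt_eq_zero (hderiv1 0 hpos0)
  have h11 : g1 1 = 0 := hmin1.hasDerivAt_eq_zero (hderiv1 1 hpos1)
  have h20 : 0 ≤ g2 0 := aux_second_deriv_nonneg hmin0
    ((hev 0 hpos0).mono fun t htt => hderiv1 t htt) (hderiv2 0 hpos0)
  have h21 : 0 ≤ g2 1 := aux_second_deriv_nonneg hmin1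
    ((hev 1 hpos1).mono fun t htt => hderiv1 t htt) (hderiv2 1 hpos1)
  -- strict positivity of g2 on (0,1)
  have hconv := aux_strictConvexOn_rpow_neg (show p - 2 < 0 by linarith)
  have hstrictI : ∀ t ∈ Set.Ioo (0:ℝ) 1, ∀ i, d i ≠ 0 →
      (1 - t) * ((p * (p - 1) * (d i) ^ 2) * (u i 0) ^ (p - 2)) +
        t * ((p * (p - 1) * (d i) ^ 2) * (u i 1) ^ (p - 2))
        < (p * (p - 1) * (d i) ^ 2) * (u i t) ^ (p - 2) := by
    intro t ht i hdi
    have hxi : x i ≠ 0 := fun h => hdi (hd0 i h)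
    have hu0 : 0 < u i 0 := hpos0 i hxi
    have hu1 : 0 < u i 1 := hpos1 i hxi
    have hne' : u i 0 ≠ u i 1 := by
      intro h
      have hz : σ i * d i = 0 := by
        have e0 : u i 0 = σ i * x i := by simp [hu]
        have e1 : u i 1 = σ i * x i + σ i * d i := by simp [hu]
        rw [e0, e1] at h; linarith
      rcases mul_eq_zero.1 hz with h' | h'
      · have habs : |σ i| = 1 := by by_cases h'' : x i < 0 <;> simp [hσ, h'']
        rw [h'] at habs; simp at habs
      · exact hdi h'
    have hmid : u i t = (1 - t) * u i 0 + t * u i 1 := by simp [hu]; ring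
    have hcx := hconv.2 (mem_Ioi.2 hu0) (mem_Ioi.2 hu1) hne'
      (show (0:ℝ) < 1 - t by linarith [ht.2]) ht.1 (by ring)
    simp only [smul_eq_mul] at hcx
    have hd2 : 0 < (d i) ^ 2 := by
      have := pow_pos (abs_pos.2 hdi) 2
      rwa [sq_abs] at this
    have hneg : p * (p - 1) * (d i) ^ 2 < 0 :=
      mul_neg_of_neg_of_pos (mul_neg_of_pos_of_neg hp0 (by linarith)) hd2
    have h' := mul_lt_mul_of_neg_left hcx hneg
    calc (1 - t) * ((p * (p - 1) * (d i) ^ 2) * (u i 0) ^ (p - 2)) +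
          t * ((p * (p - 1) * (d i) ^ 2) * (u i 1) ^ (p - 2))
        = (p * (p - 1) * (d i) ^ 2) *
            ((1 - t) * (u i 0) ^ (p - 2) + t * (u i 1) ^ (p - 2)) := by ring
      _ < (p * (p - 1) * (d i) ^ 2) * (((1 - t) * u i 0 + t * u i 1) ^ (p - 2)) := h'
      _ = (p * (p - 1) * (d i) ^ 2) * (u i t) ^ (p - 2) := by rw [← hmid]
  have hg2pos : ∀ t ∈ Set.Ioo (0:ℝ) 1, 0 < g2 t := by
    intro t ht
    have hle : ∀ i ∈ Finset.univ (α := Fin n),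
        (1 - t) * ((p * (p - 1) * (d i) ^ 2) * (u i 0) ^ (p - 2)) +
          t * ((p * (p - 1) * (d i) ^ 2) * (u i 1) ^ (p - 2))
          ≤ (p * (p - 1) * (d i) ^ 2) * (u i t) ^ (p - 2) := by
      intro i _
      by_cases hdi : d i = 0
      · apply le_of_eq
        rw [hdi]; ring
      · exact (hstrictI t ht i hdi).le
    have hlt := Finset.sum_lt_sum hle ⟨i₀, Finset.mem_univ _, hstrictI t ht i₀ hi₀⟩
    have hsplit : ∑ i, ((1 - t) * ((p * (p - 1) * (d i) ^ 2) * (u i 0) ^ (p - 2)) +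
          t * ((p * (p - 1) * (d i) ^ 2) * (u i 1) ^ (p - 2)))
        = (1 - t) * ∑ i, (p * (p - 1) * (d i) ^ 2) * (u i 0) ^ (p - 2) +
          t * ∑ i, (p * (p - 1) * (d i) ^ 2) * (u i 1) ^ (p - 2) := by
      rw [Finset.sum_add_distrib, Finset.mul_sum, Finset.mul_sum]
    rw [hsplit] at hlt
    have hmul := mul_lt_mul_of_pos_left hlt hlam
    have c0 : 0 ≤ (1 - t) * g2 0 := mul_nonneg (by linarith [ht.2]) h20
    have c1 : 0 ≤ t * g2 1 := mul_nonneg ht.1.le h21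
    have hexp : (1 - t) * g2 0 + t * g2 1 =
        2 * q2 + lam * ((1 - t) * ∑ i, (p * (p - 1) * (d i) ^ 2) * (u i 0) ^ (p - 2) +
          t * ∑ i, (p * (p - 1) * (d i) ^ 2) * (u i 1) ^ (p - 2)) := by
      simp only [hg2]
      ring
    have hgoal : 0 < 2 * q2 + lam * ∑ i, (p * (p - 1) * (d i) ^ 2) * (u i t) ^ (p - 2) := by
      linarith [hmul, c0, c1, hexp.symm.le, hexp.le]
    simpa only [hg2] using hgoal
  -- g1 is strictly monotone on [0,1], contradicting g1 0 = g1 1 = 0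
  have hmono : StrictMonoOn g1 (Set.Icc (0:ℝ) 1) := by
    apply strictMonoOn_of_deriv_pos (convex_Icc 0 1)
    · intro t ht
      exact (hderiv2 t fun i hi => hupos i hi t ht).continuousAt.continuousWithinAt
    · intro t ht
      rw [interior_Icc] at ht
      rw [(hderiv2 t fun i hi => hupos i hi t (Ioo_subset_Icc_self ht)).deriv]
      exact hg2pos t ht
  have hfin := hmono (left_mem_Icc.2 zero_le_one) (right_mem_Icc.2 zero_le_one) zero_lt_one
  rw [h10, h11] at hfin
  exact lt_irrefl 0 hfin

end


/-- Corollary 3.3: the ℓ_p regularized least squares objective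
`F x = ‖Ax - b‖² + λ ∑ |x_i|^p` (`0 < p < 1`, `λ > 0`) has only finitely many local minima. -/
theorem stmt3 (n m : ℕ) (p lam : ℝ) (hp0 : 0 < p) (hp1 : p < 1) (hlam : 0 < lam)
    (A : EuclideanSpace ℝ (Fin n) →L[ℝ] EuclideanSpace ℝ (Fin m))
    (b : EuclideanSpace ℝ (Fin m))
    (F : EuclideanSpace ℝ (Fin n) → ℝ)
    (hF : ∀ x, F x = ‖A x - b‖ ^ 2 + lam * ∑ i, |x i| ^ p) :
    {x : EuclideanSpace ℝ (Fin n) | IsLocalMin F x}.Finite := by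
  apply Set.Finite.of_finite_image
    (f := fun (z : EuclideanSpace ℝ (Fin n)) => fun i => (decide (0 < z i), decide (z i < 0)))
  · exact Set.toFinite _
  · intro z hz z' hz' h
    apply aux_unique hp0 hp1 hlam A b F hF z z' hz hz'
    intro i
    have hcf := congrFun h i
    rw [Prod.mk.injEq] at hcf
    exact ⟨decide_eq_decide.mp hcf.1, decide_eq_decide.mp hcf.2⟩
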